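/- Let m ≥ 1 and let J be the standard symplectic 2m × 2m real matrix (J e_i = e_{m+i} and J e_{m+i} = −e_i for 1 ≤ i ≤ m, so J² = −I). Define the linear map L on the space of skew-symmetric real 2m × 2m matrices by L(A) = −tr(JA)·J − J A J. Then L indeed maps skew-symmetric matrices to skew-symmetric matrices, and its eigenvalues are exactly 2m+1, 1 and −1, with eigenspace dimensions 1, m² − 1 and m² − m respectively; the eigenspace for the eigenvalue 2m+1 is spanned by J. -/

import Mathlib

open Matrix Module

/-- The subtype of strictly increasing pairs in `Fin m × Fin m`. -/
def ltPairs (m : ℕ) := {p : Fin m × Fin m // p.1 < p.2}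

instance (m : ℕ) : Fintype (ltPairs m) := by unfold ltPairs; infer_instance

def ltPairsEquiv (m : ℕ) : ltPairs m ≃ Σ j : Fin m, Fin j.1 where
  toFun p := ⟨p.1.2, ⟨p.1.1.1, p.2⟩⟩
  invFun s := ⟨(⟨s.2.1, s.2.2.trans s.1.2⟩, s.1), s.2.2⟩
  left_inv p := rfl
  right_inv s := rfl

lemma card_ltPairs (m : ℕ) : 2 * Fintype.card (ltPairs m) = m * m - m := by
  rw [Fintype.card_congr (ltPairsEquiv m)]
  rw [Fintype.card_sigma]
  simp only [Fintype.card_fin]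
  have := Finset.sum_range_id_mul_two m
  have h2 : ∑ j : Fin m, (j : ℕ) = ∑ i ∈ Finset.range m, i := by
    exact Fin.sum_univ_eq_sum_range (fun i => i) m
  rw [h2]
  have hm : m * (m - 1) = m * m - m := by
    cases m with
    | zero => simp
    | succ n => simp [Nat.succ_sub_one]; ring_nf; omega
  omega

/-- Skew-symmetric `m × m` real matrices. -/
def skewS (m : ℕ) : Submodule ℝ (Matrix (Fin m) (Fin m) ℝ) where
  carrier := {A | Aᵀ = -A}
  add_mem' := by
    intro a b ha hb
    simp only [Set.mem_setOf_eq] at *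
    rw [transpose_add, ha, hb, neg_add]
  zero_mem' := by simp
  smul_mem' := by
    intro c A hA
    simp only [Set.mem_setOf_eq] at *
    rw [transpose_smul, hA, smul_neg]

lemma mem_skewS {m : ℕ} (A : Matrix (Fin m) (Fin m) ℝ) : A ∈ skewS m ↔ Aᵀ = -A := Iff.rfl

/-- Symmetric traceless `m × m` real matrices. -/
def symS0 (m : ℕ) : Submodule ℝ (Matrix (Fin m) (Fin m) ℝ) where
  carrier := {A | Aᵀ = A ∧ Matrix.trace A = 0}
  add_mem' := by
    intro a b ha hb
    obtain ⟨ha1, ha2⟩ := ha; obtain ⟨hb1, hb2⟩ := hb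
    constructor
    · rw [transpose_add, ha1, hb1]
    · rw [Matrix.trace_add, ha2, hb2, add_zero]
  zero_mem' := by simp
  smul_mem' := by
    intro c A hA
    obtain ⟨h1, h2⟩ := hA
    constructor
    · rw [transpose_smul, h1]
    · rw [Matrix.trace_smul, h2, smul_zero]

lemma mem_symS0 {m : ℕ} (A : Matrix (Fin m) (Fin m) ℝ) :
    A ∈ symS0 m ↔ Aᵀ = A ∧ Matrix.trace A = 0 := Iff.rfl

/-- Evaluation of a skew matrix on strictly increasing pairs, as a linear map. -/
def skewEval (m : ℕ) : skewS m →ₗ[ℝ] (ltPairs m → ℝ) where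
  toFun A := fun p => A.1 p.1.1 p.1.2
  map_add' A B := rfl
  map_smul' c A := rfl

lemma skewEval_bijective (m : ℕ) : Function.Bijective (skewEval m) := by
  constructor
  · intro A B h
    ext i j
    have key : ∀ (C : skewS m), (∀ p : ltPairs m, C.1 p.1.1 p.1.2 = 0) → C.1 i j = 0 := by
      intro C hC
      rcases lt_trichotomy i j with h' | h' | h'
      · exact hC ⟨(i, j), h'⟩
      · subst h'
        have := congrFun (congrFun C.2 i) i
        simp only [transpose_apply, Matrix.neg_apply] at this
        linarith
      · have := congrFun (congrFun C.2 j) i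
        simp only [transpose_apply, Matrix.neg_apply] at this
        rw [this, hC ⟨(j, i), h'⟩, neg_zero]
    have hAB : ∀ p : ltPairs m, (A - B).1 p.1.1 p.1.2 = 0 := by
      intro p
      have := congrFun h p
      simp only [skewEval] at this
      simp [Submodule.coe_sub, this, Matrix.sub_apply]
      exact sub_eq_zero_of_eq this
    have := key (A - B) hAB
    simp only [Submodule.coe_sub, Matrix.sub_apply] at this
    linarith
  · intro g
    refine ⟨⟨fun i j => if h : i < j then g ⟨(i, j), h⟩ else if h' : j < i then -g ⟨(j, i), h'⟩ else 0, ?_⟩, ?_⟩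
    · ext i j
      show (if h : j < i then g ⟨(j, i), h⟩ else if h' : i < j then -g ⟨(i, j), h'⟩ else 0) =
        -(if h : i < j then g ⟨(i, j), h⟩ else if h' : j < i then -g ⟨(j, i), h'⟩ else 0)
      rcases lt_trichotomy i j with h' | h' | h'
      · rw [dif_neg (asymm h'), dif_pos h', dif_pos h']
      · subst h'; simp
      · rw [dif_pos h', dif_neg (asymm h'), dif_pos h', neg_neg]
    · ext p
      show (if h : p.1.1 < p.1.2 then g ⟨(p.1.1, p.1.2), h⟩ else _) = g p
      rw [dif_pos p.2]
      congr

lemma finrank_skewS (m : ℕ) : finrank ℝ (skewS m) = Fintype.card (ltPairs m) := by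
  rw [(LinearEquiv.ofBijective (skewEval m) (skewEval_bijective m)).finrank_eq]
  simp [Module.finrank_pi]

def lePairs (m : ℕ) := {p : Fin m × Fin m // p.1 ≤ p.2}

instance (m : ℕ) : Fintype (lePairs m) := by unfold lePairs; infer_instance

def lePairsEquiv (m : ℕ) : lePairs m ≃ ltPairs m ⊕ Fin m where
  toFun p := if h : p.1.1 = p.1.2 then Sum.inr p.1.1 else Sum.inl ⟨p.1, lt_of_le_of_ne p.2 h⟩
  invFun s := Sum.elim (fun q => ⟨q.1, le_of_lt q.2⟩) (fun i => ⟨(i, i), le_refl i⟩) s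
  left_inv p := by
    by_cases h : p.1.1 = p.1.2
    · simp only [dif_pos h]
      apply Subtype.ext
      exact Prod.ext rfl h
    · simp only [dif_neg h, Sum.elim_inl]
      exact Subtype.ext rfl
  right_inv s := by
    rcases s with q | i
    · show (if h : q.1.1 = q.1.2 then Sum.inr q.1.1 else Sum.inl ⟨q.1, lt_of_le_of_ne (le_of_lt q.2) h⟩) = Sum.inl q
      rw [dif_neg (ne_of_lt q.2)]
      rfl
    · show (if h : i = i then Sum.inr i else _) = Sum.inr i
      rw [dif_pos rfl]

lemma card_lePairs (m : ℕ) :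
    Fintype.card (lePairs m) = Fintype.card (ltPairs m) + m := by
  rw [Fintype.card_congr (lePairsEquiv m), Fintype.card_sum, Fintype.card_fin]

/-- Symmetric `m × m` real matrices. -/
def symS (m : ℕ) : Submodule ℝ (Matrix (Fin m) (Fin m) ℝ) where
  carrier := {A | Aᵀ = A}
  add_mem' := by
    intro a b ha hb
    simp only [Set.mem_setOf_eq] at *
    rw [transpose_add, ha, hb]
  zero_mem' := by simp
  smul_mem' := by
    intro c A hA
    simp only [Set.mem_setOf_eq] at *
    rw [transpose_smul, hA]

def symEval (m : ℕ) : symS m →ₗ[ℝ] (lePairs m → ℝ) where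
  toFun A := fun p => A.1 p.1.1 p.1.2
  map_add' A B := rfl
  map_smul' c A := rfl

lemma symEval_bijective (m : ℕ) : Function.Bijective (symEval m) := by
  constructor
  · intro A B h
    have key : ∀ i j : Fin m, (A : Matrix (Fin m) (Fin m) ℝ) i j = B.1 i j := by
      intro i j
      rcases le_total i j with h' | h'
      · exact congrFun h ⟨(i, j), h'⟩
      · have hA := congrFun (congrFun A.2 j) i
        have hB := congrFun (congrFun B.2 j) i
        simp only [transpose_apply] at hA hB
        rw [hA, hB]
        exact congrFun h ⟨(j, i), h'⟩
    ext i j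
    exact key i j
  · intro g
    refine ⟨⟨fun i j => if h : i ≤ j then g ⟨(i, j), h⟩ else g ⟨(j, i), le_of_not_ge h⟩, ?_⟩, ?_⟩
    · ext i j
      show (if h : j ≤ i then g ⟨(j, i), h⟩ else g ⟨(i, j), le_of_not_ge h⟩) =
        (if h : i ≤ j then g ⟨(i, j), h⟩ else g ⟨(j, i), le_of_not_ge h⟩)
      rcases lt_trichotomy i j with h' | h' | h'
      · rw [dif_neg (not_le.mpr h'), dif_pos h'.le]
      · subst h'; rfl
      · rw [dif_pos h'.le, dif_neg (not_le.mpr h')]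
    · ext p
      show (if h : p.1.1 ≤ p.1.2 then g ⟨(p.1.1, p.1.2), h⟩ else _) = g p
      rw [dif_pos p.2]
      congr

lemma finrank_symS (m : ℕ) : finrank ℝ (symS m) = Fintype.card (lePairs m) := by
  rw [(LinearEquiv.ofBijective (symEval m) (symEval_bijective m)).finrank_eq]
  simp [Module.finrank_pi]

noncomputable def symTrace (m : ℕ) : symS m →ₗ[ℝ] ℝ :=
  (Matrix.traceLinearMap (Fin m) ℝ ℝ).comp (symS m).subtype

set_option synthInstance.maxHeartbeats 1000000 in
noncomputable def symS0EquivKer (m : ℕ) : symS0 m ≃ₗ[ℝ] LinearMap.ker (symTrace m) where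
  toFun b := ⟨⟨b.1, b.2.1⟩, b.2.2⟩
  invFun b := ⟨b.1.1, b.1.2, b.2⟩
  map_add' _ _ := rfl
  map_smul' _ _ := rfl
  left_inv _ := rfl
  right_inv _ := rfl

lemma symTrace_surjective {m : ℕ} (hm : 1 ≤ m) : Function.Surjective (symTrace m) := by
  intro r
  refine ⟨(r / m) • ⟨(1 : Matrix (Fin m) (Fin m) ℝ), transpose_one⟩, ?_⟩
  show Matrix.trace ((r / m) • (1 : Matrix (Fin m) (Fin m) ℝ)) = r
  rw [Matrix.trace_smul, Matrix.trace_one]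
  simp only [Fintype.card_fin, smul_eq_mul]
  field_simp

set_option synthInstance.maxHeartbeats 1000000 in
lemma finrank_symS0 {m : ℕ} (hm : 1 ≤ m) :
    finrank ℝ (symS0 m) + 1 = Fintype.card (ltPairs m) + m := by
  have h1 : finrank ℝ (symS0 m) = finrank ℝ (LinearMap.ker (symTrace m)) :=
    (symS0EquivKer m).finrank_eq
  have h2 := LinearMap.finrank_range_add_finrank_ker (symTrace m)
  have h3 : LinearMap.range (symTrace m) = ⊤ :=
    LinearMap.range_eq_top.mpr (symTrace_surjective hm)
  rw [h3] at h2
  have h4 : finrank ℝ (⊤ : Submodule ℝ ℝ) = 1 := by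
    rw [finrank_top]; exact Module.finrank_self ℝ
  rw [h4] at h2
  rw [finrank_symS, card_lePairs] at h2
  omega

lemma trace_fromBlocks' {m : ℕ} (a b c d : Matrix (Fin m) (Fin m) ℝ) :
    Matrix.trace (Matrix.fromBlocks a b c d) = Matrix.trace a + Matrix.trace d := by
  simp [Matrix.trace, Matrix.diag, Fintype.sum_sum_type, Matrix.fromBlocks]

set_option maxHeartbeats 1000000 in
theorem stmt_3 (m : ℕ) (hm : 1 ≤ m)
    (J : Matrix (Fin m ⊕ Fin m) (Fin m ⊕ Fin m) ℝ)
    (hJ : J = Matrix.fromBlocks 0 (-1) 1 0)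
    (L : Matrix (Fin m ⊕ Fin m) (Fin m ⊕ Fin m) ℝ →ₗ[ℝ]
      Matrix (Fin m ⊕ Fin m) (Fin m ⊕ Fin m) ℝ)
    (hL : ∀ A, L A = -(Matrix.trace (J * A)) • J - J * A * J)
    (S : Submodule ℝ (Matrix (Fin m ⊕ Fin m) (Fin m ⊕ Fin m) ℝ))
    (hS : ∀ A, A ∈ S ↔ Matrix.transpose A = -A) :
    (∀ A ∈ S, L A ∈ S) ∧
    (∀ μ : ℝ, (∃ A ∈ S, A ≠ 0 ∧ L A = μ • A) →
      μ = 2 * (m : ℝ) + 1 ∨ μ = 1 ∨ μ = -1) ∧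
    Module.finrank ℝ (↥(Module.End.eigenspace L (2 * (m : ℝ) + 1) ⊓ S)) = 1 ∧
    Module.finrank ℝ (↥(Module.End.eigenspace L 1 ⊓ S)) = m ^ 2 - 1 ∧
    Module.finrank ℝ (↥(Module.End.eigenspace L (-1) ⊓ S)) = m ^ 2 - m ∧
    Module.End.eigenspace L (2 * (m : ℝ) + 1) ⊓ S = Submodule.span ℝ {J} := by
  have hm' : (1 : ℝ) ≤ (m : ℝ) := by exact_mod_cast hm
  -- block description of L
  have hLb : ∀ a b c d : Matrix (Fin m) (Fin m) ℝ,
      L (fromBlocks a b c d) = fromBlocks d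
        ((Matrix.trace b - Matrix.trace c) • 1 - c)
        (-((Matrix.trace b - Matrix.trace c) • 1) - b) a := by
    intro a b c d
    rw [hL, hJ]
    rw [Matrix.fromBlocks_multiply, Matrix.fromBlocks_multiply, trace_fromBlocks']
    simp only [Matrix.zero_mul, Matrix.one_mul, Matrix.neg_mul, Matrix.mul_zero,
      Matrix.mul_one, Matrix.mul_neg, zero_add, add_zero, neg_neg, Matrix.trace_neg,
      Matrix.fromBlocks_smul, sub_eq_add_neg, Matrix.fromBlocks_neg, Matrix.fromBlocks_add,
      Matrix.fromBlocks_inj]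
    refine ⟨by module, by module, by module, by module⟩
  -- membership in S in block form
  have hmemS : ∀ a b c d : Matrix (Fin m) (Fin m) ℝ,
      fromBlocks a b c d ∈ S ↔ (aᵀ = -a ∧ cᵀ = -b ∧ bᵀ = -c ∧ dᵀ = -d) := by
    intro a b c d
    rw [hS, Matrix.fromBlocks_transpose]
    rw [show -fromBlocks a b c d = fromBlocks (-a) (-b) (-c) (-d) from
      (Matrix.fromBlocks_neg a b c d)]
    exact Matrix.fromBlocks_inj
  -- eigen-equation in block form
  have hEigB : ∀ (μ : ℝ) (a b c d : Matrix (Fin m) (Fin m) ℝ),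
      (L (fromBlocks a b c d) = μ • fromBlocks a b c d) ↔
      (d = μ • a ∧ (Matrix.trace b - Matrix.trace c) • 1 - c = μ • b ∧
        -((Matrix.trace b - Matrix.trace c) • 1) - b = μ • c ∧ a = μ • d) := by
    intro μ a b c d
    rw [hLb, Matrix.fromBlocks_smul, Matrix.fromBlocks_inj]
  have hJT : Jᵀ = -J := by
    rw [hJ, Matrix.fromBlocks_transpose,
      show -fromBlocks (0 : Matrix (Fin m) (Fin m) ℝ) (-1) 1 0 = fromBlocks (-0) (- -1) (-1) (-0)
        from Matrix.fromBlocks_neg 0 (-1) 1 0]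
    simp
  -- Part 1
  have part1 : ∀ A ∈ S, L A ∈ S := by
    intro A hAS
    rw [hS] at hAS ⊢
    rw [hL]
    rw [Matrix.transpose_sub, Matrix.transpose_smul, Matrix.transpose_mul,
      Matrix.transpose_mul, hJT, hAS]
    simp only [Matrix.neg_mul, Matrix.mul_neg, neg_neg, smul_neg, neg_sub, Matrix.mul_assoc]
    abel
  -- Part 2: classification of eigenvalues
  have part2 : ∀ μ : ℝ, (∃ A ∈ S, A ≠ 0 ∧ L A = μ • A) →
      μ = 2 * (m : ℝ) + 1 ∨ μ = 1 ∨ μ = -1 := by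
    intro μ hex
    obtain ⟨A, hAS, hA0, hAe⟩ := hex
    by_contra hcon
    push_neg at hcon
    obtain ⟨h1, h2, h3⟩ := hcon
    obtain ⟨a, b, c, d, rfl⟩ : ∃ a b c d, A = fromBlocks a b c d :=
      ⟨_, _, _, _, (Matrix.fromBlocks_toBlocks A).symm⟩
    rw [hmemS] at hAS
    obtain ⟨hsa, hcb, hbc, hsd⟩ := hAS
    rw [hEigB] at hAe
    obtain ⟨e1, e2, e3, e4⟩ := hAe
    have haa : a = (μ * μ) • a := by
      calc a = μ • d := e4
        _ = μ • (μ • a) := by rw [e1]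
        _ = (μ * μ) • a := smul_smul μ μ a
    have ha0 : a = 0 := by
      have h : (1 - μ * μ) • a = 0 := by
        rw [sub_smul, one_smul, ← haa, sub_self]
      rcases smul_eq_zero.mp h with h' | h'
      · exfalso
        have hμμ : μ * μ = 1 := by linarith
        rcases mul_self_eq_one_iff.mp hμμ with h'' | h''
        · exact h2 h''
        · exact h3 h''
      · exact h'
    have hd0 : d = 0 := by rw [e1, ha0, smul_zero]
    have hbcsum : μ • b + μ • c = -(b + c) := by rw [← e2, ← e3]; abel
    have hsum0 : (μ + 1) • (b + c) = 0 := by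
      rw [add_smul, one_smul, smul_add, hbcsum]; abel
    have hc : c = -b := by
      rcases smul_eq_zero.mp hsum0 with h' | h'
      · exact absurd (by linarith : μ = -1) h3
      · exact eq_neg_of_add_eq_zero_right h'
    subst hc
    have htr : Matrix.trace b - Matrix.trace (-b) = 2 * Matrix.trace b := by
      rw [Matrix.trace_neg]; ring
    rw [htr, sub_neg_eq_add] at e2
    have e2t := congrArg Matrix.trace e2
    simp only [Matrix.trace_add, Matrix.trace_smul, Matrix.trace_one, smul_eq_mul,
      Fintype.card_fin] at e2t
    have htrb : Matrix.trace b = 0 := by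
      by_contra htrb0
      have hfac : (2 * (m : ℝ) + 1 - μ) * Matrix.trace b = 0 := by linear_combination e2t
      rcases mul_eq_zero.mp hfac with h' | h'
      · exact h1 (by linarith)
      · exact htrb0 h'
    rw [htrb] at e2
    have hb0 : b = 0 := by
      have h : (μ - 1) • b = 0 := by
        rw [sub_smul, one_smul, ← e2]
        simp
      rcases smul_eq_zero.mp h with h' | h'
      · exact absurd (by linarith : μ = 1) h2
      · exact h'
    apply hA0
    rw [ha0, hb0, hd0]
    simp
  -- J is in the top eigenspace and in S
  have hJS : J ∈ S := (hS J).mpr hJT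
  have hJeig : J ∈ Module.End.eigenspace L (2 * (m : ℝ) + 1) := by
    rw [Module.End.mem_eigenspace_iff, hJ, hLb]
    have ht : Matrix.trace (-1 : Matrix (Fin m) (Fin m) ℝ) -
        Matrix.trace (1 : Matrix (Fin m) (Fin m) ℝ) = -(2 * (m : ℝ)) := by
      rw [Matrix.trace_neg, Matrix.trace_one]
      simp only [Fintype.card_fin]
      push_cast
      ring
    rw [ht, Matrix.fromBlocks_smul, Matrix.fromBlocks_inj]
    refine ⟨by simp, by module, by module, by simp⟩
  -- the top eigenspace is spanned by J
  have hspanle : Module.End.eigenspace L (2 * (m : ℝ) + 1) ⊓ S ≤ Submodule.span ℝ {J} := by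
    intro A hA
    rw [Submodule.mem_inf] at hA
    obtain ⟨hAe, hAS⟩ := hA
    rw [Module.End.mem_eigenspace_iff] at hAe
    obtain ⟨a, b, c, d, rfl⟩ : ∃ a b c d, A = fromBlocks a b c d :=
      ⟨_, _, _, _, (Matrix.fromBlocks_toBlocks A).symm⟩
    rw [hEigB] at hAe
    obtain ⟨e1, e2, e3, e4⟩ := hAe
    have haa : a = ((2 * (m : ℝ) + 1) * (2 * (m : ℝ) + 1)) • a := by
      calc a = (2 * (m : ℝ) + 1) • d := e4
        _ = (2 * (m : ℝ) + 1) • ((2 * (m : ℝ) + 1) • a) := by rw [e1]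
        _ = ((2 * (m : ℝ) + 1) * (2 * (m : ℝ) + 1)) • a := smul_smul _ _ a
    have ha0 : a = 0 := by
      have h : (1 - (2 * (m : ℝ) + 1) * (2 * (m : ℝ) + 1)) • a = 0 := by
        rw [sub_smul, one_smul, ← haa, sub_self]
      rcases smul_eq_zero.mp h with h' | h'
      · exfalso; nlinarith
      · exact h'
    have hd0 : d = 0 := by rw [e1, ha0, smul_zero]
    have hbcsum : (2 * (m : ℝ) + 1) • b + (2 * (m : ℝ) + 1) • c = -(b + c) := by
      rw [← e2, ← e3]; abel
    have hsum0 : ((2 * (m : ℝ) + 1) + 1) • (b + c) = 0 := by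
      rw [add_smul, one_smul, smul_add, hbcsum]; abel
    have hc : c = -b := by
      rcases smul_eq_zero.mp hsum0 with h' | h'
      · exfalso; nlinarith
      · exact eq_neg_of_add_eq_zero_right h'
    subst hc
    have htr : Matrix.trace b - Matrix.trace (-b) = 2 * Matrix.trace b := by
      rw [Matrix.trace_neg]; ring
    rw [htr, sub_neg_eq_add] at e2
    have hX : (2 * Matrix.trace b) • (1 : Matrix (Fin m) (Fin m) ℝ) = (2 * (m : ℝ)) • b := by
      have h2m : (2 * (m : ℝ)) • b = (2 * (m : ℝ) + 1) • b - b := by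
        rw [add_smul, one_smul]; abel
      rw [h2m, ← e2]; abel
    have hm0 : (2 * (m : ℝ)) ≠ 0 := by
      have : (0 : ℝ) < (m : ℝ) := by linarith
      positivity
    have hb : b = ((Matrix.trace b) / (m : ℝ)) • 1 := by
      calc b = ((2 * (m : ℝ))⁻¹ * (2 * (m : ℝ))) • b := by
              rw [inv_mul_cancel₀ hm0, one_smul]
        _ = (2 * (m : ℝ))⁻¹ • ((2 * (m : ℝ)) • b) := by rw [mul_smul]
        _ = (2 * (m : ℝ))⁻¹ • ((2 * Matrix.trace b) • 1) := by rw [← hX]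
        _ = ((Matrix.trace b) / (m : ℝ)) • 1 := by
              rw [smul_smul]
              congr 1
              have : (m : ℝ) ≠ 0 := by
                intro h0
                rw [h0] at hm'
                linarith
              field_simp
    rw [Submodule.mem_span_singleton]
    set r := Matrix.trace b with hr
    refine ⟨-r / (m : ℝ), ?_⟩
    rw [hJ, Matrix.fromBlocks_smul, ha0, hd0, Matrix.fromBlocks_inj]
    refine ⟨by simp, ?_, ?_, by simp⟩
    · rw [hb]; module
    · rw [hb]; module
  have hspan : Module.End.eigenspace L (2 * (m : ℝ) + 1) ⊓ S = Submodule.span ℝ {J} := by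
    refine le_antisymm hspanle ?_
    rw [Submodule.span_le, Set.singleton_subset_iff]
    exact Submodule.mem_inf.mpr ⟨hJeig, hJS⟩
  have hJ0 : J ≠ 0 := by
    intro h
    rw [hJ] at h
    have i : Fin m := ⟨0, hm⟩
    have := congrFun (congrFun h (Sum.inr i)) (Sum.inl i)
    simp [Matrix.one_apply] at this
  -- characterization of the eigenspace for -1
  have EmmemB : ∀ a b c d : Matrix (Fin m) (Fin m) ℝ,
      fromBlocks a b c d ∈ Module.End.eigenspace L (-1) ⊓ S ↔
      (aᵀ = -a ∧ bᵀ = -b ∧ c = b ∧ d = -a) := by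
    intro a b c d
    rw [Submodule.mem_inf, Module.End.mem_eigenspace_iff, hEigB, hmemS]
    constructor
    · rintro ⟨⟨e1, e2, e3, e4⟩, hsa, hcb, hbc, hsd⟩
      rw [neg_one_smul] at e1 e2
      have hc : c = (Matrix.trace b - Matrix.trace c) • 1 + b := by
        calc c = -((Matrix.trace b - Matrix.trace c) • 1 - c)
                  + (Matrix.trace b - Matrix.trace c) • 1 := by abel
          _ = -(-b) + (Matrix.trace b - Matrix.trace c) • 1 := by rw [e2]
          _ = (Matrix.trace b - Matrix.trace c) • 1 + b := by abel
      have htc := congrArg Matrix.trace hc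
      simp only [Matrix.trace_add, Matrix.trace_smul, Matrix.trace_one, smul_eq_mul,
        Fintype.card_fin] at htc
      have ht0 : Matrix.trace b - Matrix.trace c = 0 := by
        have hmr : (0 : ℝ) < (m : ℝ) := by linarith
        nlinarith [htc]
      rw [ht0] at hc
      simp only [zero_smul, zero_add] at hc
      refine ⟨hsa, ?_, hc, e1⟩
      rw [hc] at hcb
      exact hcb
    · rintro ⟨h1, h2, h3, h4⟩
      subst h3; subst h4
      refine ⟨⟨by simp, by simp, by simp, by simp⟩, h1, h2, h2, by rw [Matrix.transpose_neg, h1, neg_neg]⟩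
  -- characterization of the eigenspace for 1
  have E1memB : ∀ a b c d : Matrix (Fin m) (Fin m) ℝ,
      fromBlocks a b c d ∈ Module.End.eigenspace L 1 ⊓ S ↔
      (aᵀ = -a ∧ (bᵀ = b ∧ Matrix.trace b = 0) ∧ c = -b ∧ d = a) := by
    intro a b c d
    rw [Submodule.mem_inf, Module.End.mem_eigenspace_iff, hEigB, hmemS]
    constructor
    · rintro ⟨⟨e1, e2, e3, e4⟩, hsa, hcb, hbc, hsd⟩
      have hbcsum : (1 : ℝ) • b + (1 : ℝ) • c = -(b + c) := by rw [← e2, ← e3]; abel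
      simp only [one_smul] at hbcsum
      have hsum0 : (2 : ℝ) • (b + c) = 0 := by
        calc (2 : ℝ) • (b + c) = (b + c) + (b + c) := two_smul ℝ _
          _ = 0 := by nth_rewrite 1 [hbcsum]; abel
      have hc : c = -b := by
        rcases smul_eq_zero.mp hsum0 with h' | h'
        · norm_num at h'
        · exact eq_neg_of_add_eq_zero_right h'
      subst hc
      rw [one_smul] at e1 e2
      have htr : Matrix.trace b - Matrix.trace (-b) = 2 * Matrix.trace b := by
        rw [Matrix.trace_neg]; ring
      rw [htr, sub_neg_eq_add] at e2
      have h1 : (2 * Matrix.trace b) • (1 : Matrix (Fin m) (Fin m) ℝ) = 0 := by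
        calc (2 * Matrix.trace b) • (1 : Matrix (Fin m) (Fin m) ℝ)
            = ((2 * Matrix.trace b) • 1 + b) - b := by abel
          _ = b - b := by rw [e2]
          _ = 0 := sub_self b
      have htb : Matrix.trace b = 0 := by
        have h2 := congrArg Matrix.trace h1
        simp only [Matrix.trace_smul, Matrix.trace_one, Matrix.trace_zero, smul_eq_mul,
          Fintype.card_fin] at h2
        have hmr : (0 : ℝ) < (m : ℝ) := by linarith
        nlinarith [h2]
      refine ⟨hsa, ⟨?_, htb⟩, rfl, e1⟩
      rw [Matrix.transpose_neg] at hcb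
      have := congrArg Neg.neg hcb
      rw [neg_neg, neg_neg] at this
      exact this
    · rintro ⟨h1, ⟨h2, h3⟩, h4, h5⟩
      subst h4; subst h5
      refine ⟨⟨by simp, by simp [Matrix.trace_neg, h3], by simp [Matrix.trace_neg, h3], by simp⟩,
        h1, by rw [Matrix.transpose_neg, h2], by rw [h2, neg_neg], h1⟩
  -- dimension of the eigenspace for -1
  have hdimm : Module.finrank ℝ ↥(Module.End.eigenspace L (-1) ⊓ S) = m ^ 2 - m := by
    have hmem : ∀ A : ↥(Module.End.eigenspace L (-1) ⊓ S),
        (A.1.toBlocks₁₁ᵀ = -A.1.toBlocks₁₁ ∧ A.1.toBlocks₁₂ᵀ = -A.1.toBlocks₁₂ ∧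
          A.1.toBlocks₂₁ = A.1.toBlocks₁₂ ∧ A.1.toBlocks₂₂ = -A.1.toBlocks₁₁) := by
      intro A
      exact (EmmemB _ _ _ _).mp (by rw [Matrix.fromBlocks_toBlocks]; exact A.2)
    let φ : ↥(Module.End.eigenspace L (-1) ⊓ S) →ₗ[ℝ] (skewS m × skewS m) :=
      { toFun := fun A => (⟨A.1.toBlocks₁₁, (hmem A).1⟩, ⟨A.1.toBlocks₁₂, (hmem A).2.1⟩),
        map_add' := fun A B => rfl,
        map_smul' := fun r A => rfl }
    have hbij : Function.Bijective φ := by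
      constructor
      · intro A B h
        have hx : A.1.toBlocks₁₁ = B.1.toBlocks₁₁ := congrArg (fun p => p.1.1) h
        have hy : A.1.toBlocks₁₂ = B.1.toBlocks₁₂ := congrArg (fun p => p.2.1) h
        apply Subtype.ext
        rw [← Matrix.fromBlocks_toBlocks A.1, ← Matrix.fromBlocks_toBlocks B.1,
          (hmem A).2.2.1, (hmem B).2.2.1, (hmem A).2.2.2, (hmem B).2.2.2, hx, hy]
      · rintro ⟨x, y⟩
        refine ⟨⟨fromBlocks x.1 y.1 y.1 (-x.1), (EmmemB _ _ _ _).mpr ⟨x.2, y.2, rfl, rfl⟩⟩, ?_⟩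
        refine Prod.ext (Subtype.ext ?_) (Subtype.ext ?_)
        · exact Matrix.toBlocks_fromBlocks₁₁ _ _ _ _
        · exact Matrix.toBlocks_fromBlocks₁₂ _ _ _ _
    have heq := LinearEquiv.finrank_eq (LinearEquiv.ofBijective φ hbij)
    rw [heq, Module.finrank_prod, finrank_skewS]
    have hk := card_ltPairs m
    have hmm2 : m ≤ m * m := Nat.le_mul_of_pos_left m (by omega)
    have hsq : m ^ 2 = m * m := sq m
    rw [hsq]
    omega
  -- dimension of the eigenspace for 1
  have hdim1 : Module.finrank ℝ ↥(Module.End.eigenspace L 1 ⊓ S) = m ^ 2 - 1 := by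
    have hmem : ∀ A : ↥(Module.End.eigenspace L 1 ⊓ S),
        (A.1.toBlocks₁₁ᵀ = -A.1.toBlocks₁₁ ∧
          (A.1.toBlocks₁₂ᵀ = A.1.toBlocks₁₂ ∧ Matrix.trace A.1.toBlocks₁₂ = 0) ∧
          A.1.toBlocks₂₁ = -A.1.toBlocks₁₂ ∧ A.1.toBlocks₂₂ = A.1.toBlocks₁₁) := by
      intro A
      exact (E1memB _ _ _ _).mp (by rw [Matrix.fromBlocks_toBlocks]; exact A.2)
    let φ : ↥(Module.End.eigenspace L 1 ⊓ S) →ₗ[ℝ] (skewS m × symS0 m) :=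
      { toFun := fun A => (⟨A.1.toBlocks₁₁, (hmem A).1⟩, ⟨A.1.toBlocks₁₂, (hmem A).2.1⟩),
        map_add' := fun A B => rfl,
        map_smul' := fun r A => rfl }
    have hbij : Function.Bijective φ := by
      constructor
      · intro A B h
        have hx : A.1.toBlocks₁₁ = B.1.toBlocks₁₁ := congrArg (fun p => p.1.1) h
        have hy : A.1.toBlocks₁₂ = B.1.toBlocks₁₂ := congrArg (fun p => p.2.1) h
        apply Subtype.ext
        rw [← Matrix.fromBlocks_toBlocks A.1, ← Matrix.fromBlocks_toBlocks B.1,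
          (hmem A).2.2.1, (hmem B).2.2.1, (hmem A).2.2.2, (hmem B).2.2.2, hx, hy]
      · rintro ⟨x, y⟩
        refine ⟨⟨fromBlocks x.1 y.1 (-y.1) x.1, (E1memB _ _ _ _).mpr ⟨x.2, y.2, rfl, rfl⟩⟩, ?_⟩
        refine Prod.ext (Subtype.ext ?_) (Subtype.ext ?_)
        · exact Matrix.toBlocks_fromBlocks₁₁ _ _ _ _
        · exact Matrix.toBlocks_fromBlocks₁₂ _ _ _ _
    have heq := LinearEquiv.finrank_eq (LinearEquiv.ofBijective φ hbij)
    rw [heq, Module.finrank_prod, finrank_skewS]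
    have hk := card_ltPairs m
    have hs0 := finrank_symS0 (m := m) hm
    have hmm2 : m ≤ m * m := Nat.le_mul_of_pos_left m (by omega)
    have hsq : m ^ 2 = m * m := sq m
    rw [hsq]
    omega
  refine ⟨part1, part2, ?_, hdim1, hdimm, hspan⟩
  rw [hspan]
  exact finrank_span_singleton hJ0
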